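/- Define χ(t,x) = tanh(2t)·tanh(x), and let Ω = {(t,x,v) ∈ ℝ³ : tanh v ≠ χ(t,x)}. Define on Ω: ξ(t,x,v) = −2(1 − χ·tanh v)/(tanh v − χ) and θ(t,x,v) = −(χ_t + χ_x·ξ)/(1 − χ²), where χ_t = 2·tanh(x)/cosh²(2t) and χ_x = tanh(2t)/cosh²(x) (note that 1 − χ² > 0 everywhere). Then the pair (ξ, θ) satisfies the determining system for reduction operators of the potential fast diffusion equation on Ω. (This verifies Case 5 with χ = tanh(2t)tanh(x) of the classification theorem of non-Lie reduction operators.) -/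

import Mathlib

/-- Partial derivative with respect to the first variable `t`. -/
noncomputable def pt3 (f : ℝ × ℝ × ℝ → ℝ) (p : ℝ × ℝ × ℝ) : ℝ :=
  deriv (fun t => f (t, p.2.1, p.2.2)) p.1

/-- Partial derivative with respect to the second variable `x`. -/
noncomputable def px3 (f : ℝ × ℝ × ℝ → ℝ) (p : ℝ × ℝ × ℝ) : ℝ :=
  deriv (fun x => f (p.1, x, p.2.2)) p.2.1

/-- Partial derivative with respect to the third variable `v`. -/
noncomputable def pv3 (f : ℝ × ℝ × ℝ → ℝ) (p : ℝ × ℝ × ℝ) : ℝ :=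
  deriv (fun v => f (p.1, p.2.1, v)) p.2.2

/-- The determining system for reduction operators `Q = ∂_t + ξ∂_x + θ∂_v`
of the potential fast diffusion equation `v_t = v_xx / v_x`:
(i) `ξ_vv = ξ ξ_v`; (ii) `ξ_t = 2ξ_xv − θ_vv − θ_v ξ + θ ξ_v − ξ ξ_x`;
(iii) `θ_xx = θ θ_x`; (iv) `θ_t = 2θ_xv − ξ_xx − ξ_x θ + ξ θ_x − θ θ_v`. -/
def DeterminingSystem (ξ θ : ℝ × ℝ × ℝ → ℝ) (Ω : Set (ℝ × ℝ × ℝ)) : Prop :=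
  ∀ p ∈ Ω,
    pv3 (pv3 ξ) p = ξ p * pv3 ξ p ∧
    pt3 ξ p =
      2 * pv3 (px3 ξ) p - pv3 (pv3 θ) p - pv3 θ p * ξ p + θ p * pv3 ξ p - ξ p * px3 ξ p ∧
    px3 (px3 θ) p = θ p * px3 θ p ∧
    pt3 θ p =
      2 * pv3 (px3 θ) p - px3 (px3 ξ) p - px3 ξ p * θ p + ξ p * px3 θ p - θ p * pv3 θ p

open Filter

lemma tanh_sq_lt_one' (x : ℝ) : Real.tanh x ^ 2 < 1 := by
  rw [Real.tanh_eq_sinh_div_cosh, div_pow, div_lt_one (by positivity)]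
  nlinarith [Real.cosh_sq_sub_sinh_sq x]

lemma cosh_tanh_sq (y : ℝ) : (1 - Real.tanh y ^ 2) * Real.cosh y ^ 2 = 1 := by
  have hc : Real.cosh y ≠ 0 := (Real.cosh_pos y).ne'
  rw [Real.tanh_eq_sinh_div_cosh, div_pow]
  field_simp
  linear_combination Real.cosh_sq_sub_sinh_sq y

lemma hd_tanh (v : ℝ) : HasDerivAt Real.tanh (1 - Real.tanh v ^ 2) v := by
  have h := (Real.hasDerivAt_sinh v).div (Real.hasDerivAt_cosh v) (Real.cosh_pos v).ne'
  have he : Real.tanh = fun y => Real.sinh y / Real.cosh y :=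
    funext fun y => Real.tanh_eq_sinh_div_cosh y
  rw [he]
  refine h.congr_deriv ?_
  simp only
  have hc : Real.cosh v ≠ 0 := (Real.cosh_pos v).ne'
  rw [div_pow]
  field_simp

lemma hd_rat (p q r m n : ℝ) (k : ℕ) (u : ℝ) (h : m + n * u ≠ 0) :
    HasDerivAt (fun u : ℝ => (p + q * u + r * u ^ 2) / (m + n * u) ^ (k + 1))
      (((q + 2 * r * u) * (m + n * u) - (p + q * u + r * u ^ 2) * ((k + 1) * n)) /
        (m + n * u) ^ (k + 2)) u := by
  have h1 : HasDerivAt (fun u : ℝ => p + q * u + r * u ^ 2) (q + 2 * r * u) u := by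
    have := (((hasDerivAt_id u).const_mul q).const_add p).add ((hasDerivAt_pow 2 u).const_mul r)
    exact this.congr_deriv (by simp; ring)
  have hl : HasDerivAt (fun u : ℝ => m + n * u) n u := by
    simpa using ((hasDerivAt_id u).const_mul n).const_add m
  have h2 : HasDerivAt (fun u : ℝ => (m + n * u) ^ (k + 1))
      ((k + 1) * (m + n * u) ^ k * n) u := by
    exact (hl.pow (k + 1)).congr_deriv (by simp)
  have h3 := h1.div h2 (pow_ne_zero _ h)
  refine h3.congr_deriv ?_
  rw [div_eq_div_iff (pow_ne_zero _ (pow_ne_zero _ h)) (pow_ne_zero _ h)]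
  ring

lemma deriv_rat_tanh (p q r m n : ℝ) (k : ℕ) (F : ℝ → ℝ) (v : ℝ)
    (hF : ∀ᶠ u in nhds v, F u =
      (p + q * Real.tanh u + r * Real.tanh u ^ 2) / (m + n * Real.tanh u) ^ (k + 1))
    (h : m + n * Real.tanh v ≠ 0) :
    deriv F v =
      (((q + 2 * r * Real.tanh v) * (m + n * Real.tanh v) -
        (p + q * Real.tanh v + r * Real.tanh v ^ 2) * ((k + 1) * n)) /
        (m + n * Real.tanh v) ^ (k + 2)) * (1 - Real.tanh v ^ 2) := by
  rw [Filter.EventuallyEq.deriv_eq hF]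
  simpa [Function.comp_def] using
    ((hd_rat p q r m n k (Real.tanh v) h).comp v (hd_tanh v)).deriv

lemma deriv_rat_tanh2 (p q r m n : ℝ) (k : ℕ) (F : ℝ → ℝ) (t : ℝ)
    (hF : ∀ᶠ u in nhds t, F u =
      (p + q * Real.tanh (2 * u) + r * Real.tanh (2 * u) ^ 2) /
        (m + n * Real.tanh (2 * u)) ^ (k + 1))
    (h : m + n * Real.tanh (2 * t) ≠ 0) :
    deriv F t =
      (((q + 2 * r * Real.tanh (2 * t)) * (m + n * Real.tanh (2 * t)) -
        (p + q * Real.tanh (2 * t) + r * Real.tanh (2 * t) ^ 2) * ((k + 1) * n)) /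
        (m + n * Real.tanh (2 * t)) ^ (k + 2)) * ((1 - Real.tanh (2 * t) ^ 2) * 2) := by
  rw [Filter.EventuallyEq.deriv_eq hF]
  have h2 : HasDerivAt (fun u : ℝ => Real.tanh (2 * u)) ((1 - Real.tanh (2 * t) ^ 2) * 2) t := by
    simpa [Function.comp_def] using (hd_tanh (2 * t)).comp t ((hasDerivAt_id t).const_mul 2)
  simpa [Function.comp_def] using
    ((hd_rat p q r m n k (Real.tanh (2 * t)) h).comp t h2).deriv

noncomputable def XI (t x v : ℝ) : ℝ :=
  -2 * (1 - Real.tanh (2 * t) * Real.tanh x * Real.tanh v) / (Real.tanh v - Real.tanh (2 * t) * Real.tanh x)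

noncomputable def TH (t x v : ℝ) : ℝ :=
  2 * (Real.tanh (2 * t) - Real.tanh x * Real.tanh v) / (Real.tanh v - Real.tanh (2 * t) * Real.tanh x)

noncomputable def XIV (t x v : ℝ) : ℝ :=
  2 * (1 - (Real.tanh (2 * t) * Real.tanh x) ^ 2) * (1 - Real.tanh v ^ 2) / (Real.tanh v - Real.tanh (2 * t) * Real.tanh x) ^ 2

noncomputable def XIX (t x v : ℝ) : ℝ :=
  -2 * Real.tanh (2 * t) * (1 - Real.tanh x ^ 2) * (1 - Real.tanh v ^ 2) / (Real.tanh v - Real.tanh (2 * t) * Real.tanh x) ^ 2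

noncomputable def XIT (t x v : ℝ) : ℝ :=
  -4 * Real.tanh x * (1 - Real.tanh (2 * t) ^ 2) * (1 - Real.tanh v ^ 2) / (Real.tanh v - Real.tanh (2 * t) * Real.tanh x) ^ 2

noncomputable def THX (t x v : ℝ) : ℝ :=
  2 * (Real.tanh (2 * t) ^ 2 - Real.tanh v ^ 2) * (1 - Real.tanh x ^ 2) / (Real.tanh v - Real.tanh (2 * t) * Real.tanh x) ^ 2

noncomputable def THT (t x v : ℝ) : ℝ :=
  4 * Real.tanh v * (1 - Real.tanh (2 * t) ^ 2) * (1 - Real.tanh x ^ 2) / (Real.tanh v - Real.tanh (2 * t) * Real.tanh x) ^ 2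

lemma d1 (t x v : ℝ) (hv : Real.tanh v ≠ Real.tanh (2 * t) * Real.tanh x) :
    deriv (fun v' => XI t x v') v = XIV t x v := by
  have hD : Real.tanh v - Real.tanh (2 * t) * Real.tanh x ≠ 0 := sub_ne_zero.mpr hv
  have hden : (-(Real.tanh (2 * t) * Real.tanh x)) + (1) * Real.tanh v ≠ 0 := by
    intro h0; exact hD (by linarith)
  rw [deriv_rat_tanh (-2) (2 * (Real.tanh (2 * t) * Real.tanh x)) (0) (-(Real.tanh (2 * t) * Real.tanh x)) (1) 0 (fun v' => XI t x v') v
    (Filter.Eventually.of_forall fun u => by simp only [XI]; ring) hden]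
  simp only [XI, TH, XIV, XIX, XIT, THX, THT]
  rw [div_mul_eq_mul_div, div_eq_div_iff (pow_ne_zero _ hden) (pow_ne_zero _ hD)]
  ring

lemma d2 (t x v : ℝ) (hv : Real.tanh v ≠ Real.tanh (2 * t) * Real.tanh x) :
    deriv (fun x' => XI t x' v) x = XIX t x v := by
  have hD : Real.tanh v - Real.tanh (2 * t) * Real.tanh x ≠ 0 := sub_ne_zero.mpr hv
  have hden : (Real.tanh v) + (-Real.tanh (2 * t)) * Real.tanh x ≠ 0 := by
    intro h0; exact hD (by linarith)
  rw [deriv_rat_tanh (-2) (2 * (Real.tanh (2 * t) * Real.tanh v)) (0) (Real.tanh v) (-Real.tanh (2 * t)) 0 (fun x' => XI t x' v) x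
    (Filter.Eventually.of_forall fun u => by simp only [XI]; ring) hden]
  simp only [XI, TH, XIV, XIX, XIT, THX, THT]
  rw [div_mul_eq_mul_div, div_eq_div_iff (pow_ne_zero _ hden) (pow_ne_zero _ hD)]
  ring

lemma d3 (t x v : ℝ) (hv : Real.tanh v ≠ Real.tanh (2 * t) * Real.tanh x) :
    deriv (fun t' => XI t' x v) t = XIT t x v := by
  have hD : Real.tanh v - Real.tanh (2 * t) * Real.tanh x ≠ 0 := sub_ne_zero.mpr hv
  have hden : (Real.tanh v) + (-Real.tanh x) * Real.tanh (2 * t) ≠ 0 := by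
    intro h0; exact hD (by linarith)
  rw [deriv_rat_tanh2 (-2) (2 * (Real.tanh x * Real.tanh v)) (0) (Real.tanh v) (-Real.tanh x) 0 (fun t' => XI t' x v) t
    (Filter.Eventually.of_forall fun u => by simp only [XI]; ring) hden]
  simp only [XI, TH, XIV, XIX, XIT, THX, THT]
  rw [div_mul_eq_mul_div, div_eq_div_iff (pow_ne_zero _ hden) (pow_ne_zero _ hD)]
  ring

lemma d4 (t x v : ℝ) (hv : Real.tanh v ≠ Real.tanh (2 * t) * Real.tanh x) :
    deriv (fun v' => TH t x v') v = XIX t x v := by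
  have hD : Real.tanh v - Real.tanh (2 * t) * Real.tanh x ≠ 0 := sub_ne_zero.mpr hv
  have hden : (-(Real.tanh (2 * t) * Real.tanh x)) + (1) * Real.tanh v ≠ 0 := by
    intro h0; exact hD (by linarith)
  rw [deriv_rat_tanh (2 * Real.tanh (2 * t)) (-2 * Real.tanh x) (0) (-(Real.tanh (2 * t) * Real.tanh x)) (1) 0 (fun v' => TH t x v') v
    (Filter.Eventually.of_forall fun u => by simp only [TH]; ring) hden]
  simp only [XI, TH, XIV, XIX, XIT, THX, THT]
  rw [div_mul_eq_mul_div, div_eq_div_iff (pow_ne_zero _ hden) (pow_ne_zero _ hD)]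
  ring

lemma d5 (t x v : ℝ) (hv : Real.tanh v ≠ Real.tanh (2 * t) * Real.tanh x) :
    deriv (fun x' => TH t x' v) x = THX t x v := by
  have hD : Real.tanh v - Real.tanh (2 * t) * Real.tanh x ≠ 0 := sub_ne_zero.mpr hv
  have hden : (Real.tanh v) + (-Real.tanh (2 * t)) * Real.tanh x ≠ 0 := by
    intro h0; exact hD (by linarith)
  rw [deriv_rat_tanh (2 * Real.tanh (2 * t)) (-2 * Real.tanh v) (0) (Real.tanh v) (-Real.tanh (2 * t)) 0 (fun x' => TH t x' v) x
    (Filter.Eventually.of_forall fun u => by simp only [TH]; ring) hden]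
  simp only [XI, TH, XIV, XIX, XIT, THX, THT]
  rw [div_mul_eq_mul_div, div_eq_div_iff (pow_ne_zero _ hden) (pow_ne_zero _ hD)]
  ring

lemma d6 (t x v : ℝ) (hv : Real.tanh v ≠ Real.tanh (2 * t) * Real.tanh x) :
    deriv (fun t' => TH t' x v) t = THT t x v := by
  have hD : Real.tanh v - Real.tanh (2 * t) * Real.tanh x ≠ 0 := sub_ne_zero.mpr hv
  have hden : (Real.tanh v) + (-Real.tanh x) * Real.tanh (2 * t) ≠ 0 := by
    intro h0; exact hD (by linarith)
  rw [deriv_rat_tanh2 (-2 * (Real.tanh x * Real.tanh v)) (2) (0) (Real.tanh v) (-Real.tanh x) 0 (fun t' => TH t' x v) t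
    (Filter.Eventually.of_forall fun u => by simp only [TH]; ring) hden]
  simp only [XI, TH, XIV, XIX, XIT, THX, THT]
  rw [div_mul_eq_mul_div, div_eq_div_iff (pow_ne_zero _ hden) (pow_ne_zero _ hD)]
  ring

lemma d7 (t x v : ℝ) (hv : Real.tanh v ≠ Real.tanh (2 * t) * Real.tanh x) :
    deriv (fun v' => XIV t x v') v = -4 * (1 - Real.tanh (2 * t) * Real.tanh x * Real.tanh v) * (1 - (Real.tanh (2 * t) * Real.tanh x) ^ 2) * (1 - Real.tanh v ^ 2) / (Real.tanh v - Real.tanh (2 * t) * Real.tanh x) ^ 3 := by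
  have hD : Real.tanh v - Real.tanh (2 * t) * Real.tanh x ≠ 0 := sub_ne_zero.mpr hv
  have hden : (-(Real.tanh (2 * t) * Real.tanh x)) + (1) * Real.tanh v ≠ 0 := by
    intro h0; exact hD (by linarith)
  rw [deriv_rat_tanh (2 - 2 * (Real.tanh (2 * t) * Real.tanh x) ^ 2) (0) (2 * (Real.tanh (2 * t) * Real.tanh x) ^ 2 - 2) (-(Real.tanh (2 * t) * Real.tanh x)) (1) 1 (fun v' => XIV t x v') v
    (Filter.Eventually.of_forall fun u => by simp only [XIV]; ring) hden]
  rw [div_mul_eq_mul_div, div_eq_div_iff (pow_ne_zero _ hden) (pow_ne_zero _ hD)]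
  ring

lemma d8 (t x v : ℝ) (hv : Real.tanh v ≠ Real.tanh (2 * t) * Real.tanh x) :
    deriv (fun v' => XIX t x v') v = 4 * Real.tanh (2 * t) * (1 - Real.tanh x ^ 2) * (1 - Real.tanh v ^ 2) * (1 - Real.tanh (2 * t) * Real.tanh x * Real.tanh v) / (Real.tanh v - Real.tanh (2 * t) * Real.tanh x) ^ 3 := by
  have hD : Real.tanh v - Real.tanh (2 * t) * Real.tanh x ≠ 0 := sub_ne_zero.mpr hv
  have hden : (-(Real.tanh (2 * t) * Real.tanh x)) + (1) * Real.tanh v ≠ 0 := by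
    intro h0; exact hD (by linarith)
  rw [deriv_rat_tanh (-2 * Real.tanh (2 * t) + 2 * Real.tanh (2 * t) * Real.tanh x ^ 2) (0) (2 * Real.tanh (2 * t) - 2 * Real.tanh (2 * t) * Real.tanh x ^ 2) (-(Real.tanh (2 * t) * Real.tanh x)) (1) 1 (fun v' => XIX t x v') v
    (Filter.Eventually.of_forall fun u => by simp only [XIX]; ring) hden]
  rw [div_mul_eq_mul_div, div_eq_div_iff (pow_ne_zero _ hden) (pow_ne_zero _ hD)]
  ring

lemma d9 (t x v : ℝ) (hv : Real.tanh v ≠ Real.tanh (2 * t) * Real.tanh x) :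
    deriv (fun x' => XIX t x' v) x = -4 * Real.tanh (2 * t) * (1 - Real.tanh x ^ 2) * (1 - Real.tanh v ^ 2) * (Real.tanh (2 * t) - Real.tanh x * Real.tanh v) / (Real.tanh v - Real.tanh (2 * t) * Real.tanh x) ^ 3 := by
  have hD : Real.tanh v - Real.tanh (2 * t) * Real.tanh x ≠ 0 := sub_ne_zero.mpr hv
  have hden : (Real.tanh v) + (-Real.tanh (2 * t)) * Real.tanh x ≠ 0 := by
    intro h0; exact hD (by linarith)
  rw [deriv_rat_tanh (-2 * Real.tanh (2 * t) + 2 * Real.tanh (2 * t) * Real.tanh v ^ 2) (0) (2 * Real.tanh (2 * t) - 2 * Real.tanh (2 * t) * Real.tanh v ^ 2) (Real.tanh v) (-Real.tanh (2 * t)) 1 (fun x' => XIX t x' v) x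
    (Filter.Eventually.of_forall fun u => by simp only [XIX]; ring) hden]
  rw [div_mul_eq_mul_div, div_eq_div_iff (pow_ne_zero _ hden) (pow_ne_zero _ hD)]
  ring

lemma d10 (t x v : ℝ) (hv : Real.tanh v ≠ Real.tanh (2 * t) * Real.tanh x) :
    deriv (fun x' => THX t x' v) x = 4 * (1 - Real.tanh x ^ 2) * (Real.tanh x * Real.tanh v - Real.tanh (2 * t)) * (Real.tanh v ^ 2 - Real.tanh (2 * t) ^ 2) / (Real.tanh v - Real.tanh (2 * t) * Real.tanh x) ^ 3 := by
  have hD : Real.tanh v - Real.tanh (2 * t) * Real.tanh x ≠ 0 := sub_ne_zero.mpr hv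
  have hden : (Real.tanh v) + (-Real.tanh (2 * t)) * Real.tanh x ≠ 0 := by
    intro h0; exact hD (by linarith)
  rw [deriv_rat_tanh (2 * Real.tanh (2 * t) ^ 2 - 2 * Real.tanh v ^ 2) (0) (2 * Real.tanh v ^ 2 - 2 * Real.tanh (2 * t) ^ 2) (Real.tanh v) (-Real.tanh (2 * t)) 1 (fun x' => THX t x' v) x
    (Filter.Eventually.of_forall fun u => by simp only [THX]; ring) hden]
  rw [div_mul_eq_mul_div, div_eq_div_iff (pow_ne_zero _ hden) (pow_ne_zero _ hD)]
  ring

lemma d11 (t x v : ℝ) (hv : Real.tanh v ≠ Real.tanh (2 * t) * Real.tanh x) :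
    deriv (fun v' => THX t x v') v = -4 * Real.tanh (2 * t) * (1 - Real.tanh x ^ 2) * (1 - Real.tanh v ^ 2) * (Real.tanh (2 * t) - Real.tanh x * Real.tanh v) / (Real.tanh v - Real.tanh (2 * t) * Real.tanh x) ^ 3 := by
  have hD : Real.tanh v - Real.tanh (2 * t) * Real.tanh x ≠ 0 := sub_ne_zero.mpr hv
  have hden : (-(Real.tanh (2 * t) * Real.tanh x)) + (1) * Real.tanh v ≠ 0 := by
    intro h0; exact hD (by linarith)
  rw [deriv_rat_tanh (2 * Real.tanh (2 * t) ^ 2 - 2 * Real.tanh (2 * t) ^ 2 * Real.tanh x ^ 2) (0) (2 * Real.tanh x ^ 2 - 2) (-(Real.tanh (2 * t) * Real.tanh x)) (1) 1 (fun v' => THX t x v') v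
    (Filter.Eventually.of_forall fun u => by simp only [THX]; ring) hden]
  rw [div_mul_eq_mul_div, div_eq_div_iff (pow_ne_zero _ hden) (pow_ne_zero _ hD)]
  ring


/-- Case 5 with `χ = tanh(2t)·tanh(x)` of the classification of non-Lie reduction operators
of the potential fast diffusion equation:
`ξ = −2(1 − χ tanh v)/(tanh v − χ)`, `θ = −(χ_t + χ_x ξ)/(1 − χ²)`;
note that `1 − χ² > 0` everywhere. -/
theorem reduction_operator_case5_tanh_tanh
    (χ χt χx : ℝ → ℝ → ℝ)
    (hχ : χ = fun t x => Real.tanh (2 * t) * Real.tanh x)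
    (hχt : χt = fun t x => 2 * Real.tanh x / (Real.cosh (2 * t)) ^ 2)
    (hχx : χx = fun t x => Real.tanh (2 * t) / (Real.cosh x) ^ 2)
    (ξ θ : ℝ × ℝ × ℝ → ℝ)
    (hξ : ξ = fun p =>
      -2 * (1 - χ p.1 p.2.1 * Real.tanh p.2.2) / (Real.tanh p.2.2 - χ p.1 p.2.1))
    (hθ : θ = fun p =>
      -(χt p.1 p.2.1 + χx p.1 p.2.1 * ξ p) / (1 - (χ p.1 p.2.1) ^ 2)) :
    (∀ t x : ℝ, 0 < 1 - (χ t x) ^ 2) ∧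
      DeterminingSystem ξ θ
        {p : ℝ × ℝ × ℝ | Real.tanh p.2.2 ≠ χ p.1 p.2.1} := by
  subst hχ hχt hχx
  have hxi : ξ = fun q : ℝ × ℝ × ℝ => XI q.1 q.2.1 q.2.2 := by
    rw [hξ]; rfl
  constructor
  · intro t x
    simp only
    nlinarith [tanh_sq_lt_one' (2 * t), tanh_sq_lt_one' x,
      sq_nonneg (Real.tanh (2 * t)), sq_nonneg (Real.tanh x)]
  -- θ equals its simplified form on Ω
  have hth : ∀ q : ℝ × ℝ × ℝ, Real.tanh q.2.2 ≠ Real.tanh (2 * q.1) * Real.tanh q.2.1 →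
      θ q = TH q.1 q.2.1 q.2.2 := by
    intro q hq
    have hD : Real.tanh q.2.2 - Real.tanh (2 * q.1) * Real.tanh q.2.1 ≠ 0 := sub_ne_zero.mpr hq
    have hE : 1 - (Real.tanh (2 * q.1) * Real.tanh q.2.1) ^ 2 ≠ 0 := by
      nlinarith [tanh_sq_lt_one' (2 * q.1), tanh_sq_lt_one' q.2.1,
        sq_nonneg (Real.tanh (2 * q.1)), sq_nonneg (Real.tanh q.2.1)]
    have h1 : 2 * Real.tanh q.2.1 / Real.cosh (2 * q.1) ^ 2 =
        2 * Real.tanh q.2.1 * (1 - Real.tanh (2 * q.1) ^ 2) := by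
      rw [div_eq_iff (pow_ne_zero 2 (Real.cosh_pos (2 * q.1)).ne')]
      linear_combination (-2 * Real.tanh q.2.1) * cosh_tanh_sq (2 * q.1)
    have h2 : Real.tanh (2 * q.1) / Real.cosh q.2.1 ^ 2 =
        Real.tanh (2 * q.1) * (1 - Real.tanh q.2.1 ^ 2) := by
      rw [div_eq_iff (pow_ne_zero 2 (Real.cosh_pos q.2.1).ne')]
      linear_combination (-Real.tanh (2 * q.1)) * cosh_tanh_sq q.2.1
    rw [hθ, hxi]
    simp only [XI, TH]
    rw [h1, h2]
    have hD' : Real.tanh q.2.2 - Real.tanh q.2.1 * Real.tanh (2 * q.1) ≠ 0 := by rwa [mul_comm]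
    have hE' : 1 - Real.tanh q.2.1 ^ 2 * Real.tanh (2 * q.1) ^ 2 ≠ 0 := by rwa [← mul_pow, mul_comm]
    field_simp
    ring
  -- first-order derivative formulas
  have Pv : ∀ t x v : ℝ, Real.tanh v ≠ Real.tanh (2 * t) * Real.tanh x →
      pv3 ξ (t, x, v) = XIV t x v := by
    intro t x v hv
    have h0 : pv3 ξ (t, x, v) = deriv (fun v' => XI t x v') v := by
      rw [hxi]; rfl
    rw [h0]; exact d1 t x v hv
  have Px : ∀ t x v : ℝ, Real.tanh v ≠ Real.tanh (2 * t) * Real.tanh x →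
      px3 ξ (t, x, v) = XIX t x v := by
    intro t x v hv
    have h0 : px3 ξ (t, x, v) = deriv (fun x' => XI t x' v) x := by
      rw [hxi]; rfl
    rw [h0]; exact d2 t x v hv
  have Pt : ∀ t x v : ℝ, Real.tanh v ≠ Real.tanh (2 * t) * Real.tanh x →
      pt3 ξ (t, x, v) = XIT t x v := by
    intro t x v hv
    have h0 : pt3 ξ (t, x, v) = deriv (fun t' => XI t' x v) t := by
      rw [hxi]; rfl
    rw [h0]; exact d3 t x v hv
  have evv : ∀ t x v : ℝ, Real.tanh v ≠ Real.tanh (2 * t) * Real.tanh x →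
      ∀ᶠ v' in nhds v, Real.tanh v' ≠ Real.tanh (2 * t) * Real.tanh x := by
    intro t x v hv
    exact (hd_tanh v).differentiableAt.continuousAt.eventually_ne hv
  have evx : ∀ t x v : ℝ, Real.tanh v ≠ Real.tanh (2 * t) * Real.tanh x →
      ∀ᶠ x' in nhds x, Real.tanh v ≠ Real.tanh (2 * t) * Real.tanh x' := by
    intro t x v hv
    have hc : ContinuousAt (fun x' => Real.tanh (2 * t) * Real.tanh x') x :=
      continuousAt_const.mul (hd_tanh x).differentiableAt.continuousAt
    exact (hc.eventually_ne (Ne.symm hv)).mono fun x' h => h.symm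
  have evt : ∀ t x v : ℝ, Real.tanh v ≠ Real.tanh (2 * t) * Real.tanh x →
      ∀ᶠ t' in nhds t, Real.tanh v ≠ Real.tanh (2 * t') * Real.tanh x := by
    intro t x v hv
    have hc2 : ContinuousAt (fun t' : ℝ => Real.tanh (2 * t')) t :=
      (((hd_tanh (2 * t)).comp t ((hasDerivAt_id t).const_mul 2)).differentiableAt).continuousAt
    have hc : ContinuousAt (fun t' => Real.tanh (2 * t') * Real.tanh x) t :=
      hc2.mul continuousAt_const
    exact (hc.eventually_ne (Ne.symm hv)).mono fun t' h => h.symm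
  have Qv : ∀ t x v : ℝ, Real.tanh v ≠ Real.tanh (2 * t) * Real.tanh x →
      pv3 θ (t, x, v) = XIX t x v := by
    intro t x v hv
    have hev : (fun v' => θ (t, x, v')) =ᶠ[nhds v] fun v' => TH t x v' := by
      filter_upwards [evv t x v hv] with v' hv' using hth (t, x, v') hv'
    have h0 : pv3 θ (t, x, v) = deriv (fun v' => θ (t, x, v')) v := rfl
    rw [h0, hev.deriv_eq]; exact d4 t x v hv
  have Qx : ∀ t x v : ℝ, Real.tanh v ≠ Real.tanh (2 * t) * Real.tanh x →
      px3 θ (t, x, v) = THX t x v := by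
    intro t x v hv
    have hev : (fun x' => θ (t, x', v)) =ᶠ[nhds x] fun x' => TH t x' v := by
      filter_upwards [evx t x v hv] with x' hx' using hth (t, x', v) hx'
    have h0 : px3 θ (t, x, v) = deriv (fun x' => θ (t, x', v)) x := rfl
    rw [h0, hev.deriv_eq]; exact d5 t x v hv
  have Qt : ∀ t x v : ℝ, Real.tanh v ≠ Real.tanh (2 * t) * Real.tanh x →
      pt3 θ (t, x, v) = THT t x v := by
    intro t x v hv
    have hev : (fun t' => θ (t', x, v)) =ᶠ[nhds t] fun t' => TH t' x v := by
      filter_upwards [evt t x v hv] with t' ht' using hth (t', x, v) ht'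
    have h0 : pt3 θ (t, x, v) = deriv (fun t' => θ (t', x, v)) t := rfl
    rw [h0, hev.deriv_eq]; exact d6 t x v hv
  -- the determining system
  intro p hp
  obtain ⟨t, x, v⟩ := p
  simp only [Set.mem_setOf_eq] at hp
  have hD : Real.tanh v - Real.tanh (2 * t) * Real.tanh x ≠ 0 := sub_ne_zero.mpr hp
  -- second-order derivatives
  have Svv : pv3 (pv3 ξ) (t, x, v) =
      -4 * (1 - Real.tanh (2 * t) * Real.tanh x * Real.tanh v) *
        (1 - (Real.tanh (2 * t) * Real.tanh x) ^ 2) * (1 - Real.tanh v ^ 2) /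
        (Real.tanh v - Real.tanh (2 * t) * Real.tanh x) ^ 3 := by
    have hev : (fun v' => pv3 ξ (t, x, v')) =ᶠ[nhds v] fun v' => XIV t x v' := by
      filter_upwards [evv t x v hp] with v' hv' using Pv t x v' hv'
    have h0 : pv3 (pv3 ξ) (t, x, v) = deriv (fun v' => pv3 ξ (t, x, v')) v := rfl
    rw [h0, hev.deriv_eq]; exact d7 t x v hp
  have Sxv : pv3 (px3 ξ) (t, x, v) =
      4 * Real.tanh (2 * t) * (1 - Real.tanh x ^ 2) * (1 - Real.tanh v ^ 2) *
        (1 - Real.tanh (2 * t) * Real.tanh x * Real.tanh v) /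
        (Real.tanh v - Real.tanh (2 * t) * Real.tanh x) ^ 3 := by
    have hev : (fun v' => px3 ξ (t, x, v')) =ᶠ[nhds v] fun v' => XIX t x v' := by
      filter_upwards [evv t x v hp] with v' hv' using Px t x v' hv'
    have h0 : pv3 (px3 ξ) (t, x, v) = deriv (fun v' => px3 ξ (t, x, v')) v := rfl
    rw [h0, hev.deriv_eq]; exact d8 t x v hp
  have Sxx : px3 (px3 ξ) (t, x, v) =
      -4 * Real.tanh (2 * t) * (1 - Real.tanh x ^ 2) * (1 - Real.tanh v ^ 2) *
        (Real.tanh (2 * t) - Real.tanh x * Real.tanh v) /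
        (Real.tanh v - Real.tanh (2 * t) * Real.tanh x) ^ 3 := by
    have hev : (fun x' => px3 ξ (t, x', v)) =ᶠ[nhds x] fun x' => XIX t x' v := by
      filter_upwards [evx t x v hp] with x' hx' using Px t x' v hx'
    have h0 : px3 (px3 ξ) (t, x, v) = deriv (fun x' => px3 ξ (t, x', v)) x := rfl
    rw [h0, hev.deriv_eq]; exact d9 t x v hp
  have Tvv : pv3 (pv3 θ) (t, x, v) =
      4 * Real.tanh (2 * t) * (1 - Real.tanh x ^ 2) * (1 - Real.tanh v ^ 2) *
        (1 - Real.tanh (2 * t) * Real.tanh x * Real.tanh v) /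
        (Real.tanh v - Real.tanh (2 * t) * Real.tanh x) ^ 3 := by
    have hev : (fun v' => pv3 θ (t, x, v')) =ᶠ[nhds v] fun v' => XIX t x v' := by
      filter_upwards [evv t x v hp] with v' hv' using Qv t x v' hv'
    have h0 : pv3 (pv3 θ) (t, x, v) = deriv (fun v' => pv3 θ (t, x, v')) v := rfl
    rw [h0, hev.deriv_eq]; exact d8 t x v hp
  have Txv : pv3 (px3 θ) (t, x, v) =
      -4 * Real.tanh (2 * t) * (1 - Real.tanh x ^ 2) * (1 - Real.tanh v ^ 2) *
        (Real.tanh (2 * t) - Real.tanh x * Real.tanh v) /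
        (Real.tanh v - Real.tanh (2 * t) * Real.tanh x) ^ 3 := by
    have hev : (fun v' => px3 θ (t, x, v')) =ᶠ[nhds v] fun v' => THX t x v' := by
      filter_upwards [evv t x v hp] with v' hv' using Qx t x v' hv'
    have h0 : pv3 (px3 θ) (t, x, v) = deriv (fun v' => px3 θ (t, x, v')) v := rfl
    rw [h0, hev.deriv_eq]; exact d11 t x v hp
  have Txx : px3 (px3 θ) (t, x, v) =
      4 * (1 - Real.tanh x ^ 2) * (Real.tanh x * Real.tanh v - Real.tanh (2 * t)) *
        (Real.tanh v ^ 2 - Real.tanh (2 * t) ^ 2) /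
        (Real.tanh v - Real.tanh (2 * t) * Real.tanh x) ^ 3 := by
    have hev : (fun x' => px3 θ (t, x', v)) =ᶠ[nhds x] fun x' => THX t x' v := by
      filter_upwards [evx t x v hp] with x' hx' using Qx t x' v hx'
    have h0 : px3 (px3 θ) (t, x, v) = deriv (fun x' => px3 θ (t, x', v)) x := rfl
    rw [h0, hev.deriv_eq]; exact d10 t x v hp
  have hxiv : ξ (t, x, v) = XI t x v := by rw [hxi]
  have hthv : θ (t, x, v) = TH t x v := hth (t, x, v) hp
  refine ⟨?_, ?_, ?_, ?_⟩
  · rw [Svv, hxiv, Pv t x v hp]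
    simp only [XI, XIV]
    field_simp
    ring
  · rw [Pt t x v hp, Sxv, Tvv, Qv t x v hp, hxiv, hthv, Pv t x v hp, Px t x v hp]
    simp only [XI, TH, XIV, XIX, XIT]
    have hD' : Real.tanh v - Real.tanh x * Real.tanh (2 * t) ≠ 0 := by rwa [mul_comm]
    field_simp
    ring
  · rw [Txx, hthv, Qx t x v hp]
    simp only [TH, THX]
    field_simp
    ring
  · rw [Qt t x v hp, Txv, Sxx, Px t x v hp, hxiv, hthv, Qx t x v hp, Qv t x v hp]
    simp only [XI, TH, THT, THX, XIX]
    field_simp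
    ring
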